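/- arXiv:math/0404423 — 6 statements merged into one kernel-verified Lean document; each statement's English description precedes it below -/
import Mathlib

section
/- Let λ and μ be coprime integers with 0 < λ < μ, and let a₁, …, a_j be integers, all ≥ 2, with λ/μ = [a₁, …, a_j]. Then the reversed continued fraction satisfies [a_j, a_{j−1}, …, a₁] = λ′/μ, where λ′ is the unique integer with 0 < λ′ < μ and λλ′ ≡ 1 (mod μ). -/
/-- Hirzebruch–Jung continued fraction of a list of integers:
`hjcf [] = 0`, `hjcf (e :: l) = 1 / (e - hjcf l)`, so that `hjcf [e] = 1/e`. -/
def hjcf : List ℤ → ℚ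
  | [] => 0
  | e :: l => 1 / ((e : ℚ) - hjcf l)

/-- First column (p11, p21) of the continuant matrix product. -/
def d1 : List ℤ → ℤ × ℤ
  | [] => (1, 0)
  | e :: l => (e * (d1 l).1 - (d1 l).2, (d1 l).1)

/-- Second column (p12, p22) of the continuant matrix product. -/
def d2 : List ℤ → ℤ × ℤ
  | [] => (0, 1)
  | e :: l => (e * (d2 l).1 - (d2 l).2, (d2 l).1)

lemma det_eq (a : List ℤ) : (d1 a).1 * (d2 a).2 - (d2 a).1 * (d1 a).2 = 1 := by
  induction a with
  | nil => simp [d1, d2]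
  | cons e l ih => simp only [d1, d2]; nlinarith [ih]

lemma d_append (l : List ℤ) (e : ℤ) :
    (d1 (l ++ [e])).1 = e * (d1 l).1 + (d2 l).1 ∧
    (d1 (l ++ [e])).2 = e * (d1 l).2 + (d2 l).2 ∧
    (d2 (l ++ [e])).1 = -(d1 l).1 ∧
    (d2 (l ++ [e])).2 = -(d1 l).2 := by
  induction l with
  | nil => simp [d1, d2]
  | cons f l ih =>
    obtain ⟨i1, i2, i3, i4⟩ := ih
    refine ⟨?_, ?_, ?_, ?_⟩ <;> simp [d1, d2, i1, i2, i3, i4] <;> ring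

lemma d_reverse (a : List ℤ) :
    (d1 a.reverse).1 = (d1 a).1 ∧ (d1 a.reverse).2 = -(d2 a).1 ∧
    (d2 a.reverse).1 = -(d1 a).2 ∧ (d2 a.reverse).2 = (d2 a).2 := by
  induction a with
  | nil => simp [d1, d2]
  | cons e l ih =>
    obtain ⟨i1, i2, i3, i4⟩ := ih
    obtain ⟨j1, j2, j3, j4⟩ := d_append l.reverse e
    rw [List.reverse_cons]
    refine ⟨?_, ?_, ?_, ?_⟩ <;>
      simp [d1, d2, j1, j2, j3, j4, i1, i2, i3, i4] <;> ring

lemma bounds (a : List ℤ) (h2 : ∀ e ∈ a, 2 ≤ e) :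
    0 ≤ (d1 a).2 ∧ (d1 a).2 < (d1 a).1 := by
  induction a with
  | nil => simp [d1]
  | cons e l ih =>
    have he : 2 ≤ e := h2 e (by simp)
    have := ih (fun x hx => h2 x (by simp [hx]))
    simp only [d1]
    constructor
    · linarith [this.1, this.2]
    · nlinarith [this.1, this.2]

lemma value (a : List ℤ) (h2 : ∀ e ∈ a, 2 ≤ e) :
    hjcf a = ((d1 a).2 : ℚ) / ((d1 a).1 : ℚ) := by
  induction a with
  | nil => simp [hjcf, d1]
  | cons e l ih =>
    have he : 2 ≤ e := h2 e (by simp)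
    have h2' : ∀ x ∈ l, 2 ≤ x := fun x hx => h2 x (by simp [hx])
    have hb := bounds l h2'
    have hA : (0:ℤ) < (d1 l).1 := lt_of_le_of_lt hb.1 hb.2
    have hden : (0:ℤ) < e * (d1 l).1 - (d1 l).2 := by nlinarith [hb.1, hb.2]
    have hAq : ((d1 l).1 : ℚ) ≠ 0 := by exact_mod_cast hA.ne'
    have hdq : ((e * (d1 l).1 - (d1 l).2 : ℤ) : ℚ) ≠ 0 := by exact_mod_cast hden.ne'
    have key : (e : ℚ) - ((d1 l).2 : ℚ) / ((d1 l).1 : ℚ) =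
        ((e * (d1 l).1 - (d1 l).2 : ℤ) : ℚ) / ((d1 l).1 : ℚ) := by
      push_cast; field_simp
    simp only [hjcf, ih h2', d1, key, one_div_div]
    try push_cast
    try ring

lemma coprime_d1 (a : List ℤ) : IsCoprime ((d1 a).1) ((d1 a).2) := by
  have h := det_eq a
  exact ⟨(d2 a).2, -(d2 a).1, by linarith⟩

/-- If λ/μ = [a₁, …, a_j] with all aᵢ ≥ 2, 0 < λ < μ, gcd(λ,μ) = 1,
then the reversed continued fraction [a_j, …, a₁] equals λ'/μ where
0 < λ' < μ and λλ' ≡ 1 (mod μ). -/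
theorem hjcf_reverse (lam mu : ℤ) (h0 : 0 < lam) (hlm : lam < mu)
    (hco : IsCoprime lam mu)
    (a : List ℤ) (ha : a ≠ []) (h2 : ∀ e ∈ a, 2 ≤ e)
    (hval : (lam : ℚ) / (mu : ℚ) = hjcf a)
    (lam' : ℤ) (h0' : 0 < lam') (hlt' : lam' < mu)
    (hcong : lam * lam' ≡ 1 [ZMOD mu]) :
    hjcf a.reverse = (lam' : ℚ) / (mu : ℚ) := by
  set A := (d1 a).1 with hAdef
  set c := (d1 a).2 with hcdef
  have hb := bounds a h2
  have hA : (0:ℤ) < A := lt_of_le_of_lt hb.1 hb.2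
  have hmu : (0:ℤ) < mu := lt_trans h0 hlm
  have hmuq : (mu : ℚ) ≠ 0 := by exact_mod_cast hmu.ne'
  have hAq : (A : ℚ) ≠ 0 := by exact_mod_cast hA.ne'
  -- identify (lam, mu) with (c, A)
  have hval' : (lam : ℚ) * A = c * mu := by
    rw [value a h2] at hval
    rw [div_eq_div_iff hmuq hAq] at hval
    exact_mod_cast hval
  have hvalZ : lam * A = c * mu := by exact_mod_cast hval'
  have hdvd1 : mu ∣ A := by
    have : mu ∣ lam * A := ⟨c, by linarith [hvalZ]⟩
    exact (IsCoprime.dvd_of_dvd_mul_left hco.symm this)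
  have hdvd2 : A ∣ mu := by
    have : A ∣ c * mu := ⟨lam, by linarith [hvalZ]⟩
    exact ((coprime_d1 a).dvd_of_dvd_mul_left this)
  have hAmu : A = mu := Int.dvd_antisymm hA.le hmu.le hdvd2 hdvd1
  have hlamc : lam = c := by
    have := hvalZ
    rw [hAmu] at this
    exact mul_right_cancel₀ hmu.ne' this
  -- the reverse
  obtain ⟨r1, r2, r3, r4⟩ := d_reverse a
  have h2r : ∀ e ∈ a.reverse, 2 ≤ e := fun e he => h2 e (List.mem_reverse.mp he)
  have hbr := bounds a.reverse h2r
  -- reverse is nonempty so its numerator is positive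
  have hposr : 0 < (d1 a.reverse).2 := by
    rcases List.exists_cons_of_ne_nil (show a.reverse ≠ [] by simpa using ha) with ⟨e, l, hel⟩
    have h2l : ∀ x ∈ l, 2 ≤ x := fun x hx => h2r x (by rw [hel]; simp [hx])
    have hbl := bounds l h2l
    rw [hel]
    simp only [d1]
    linarith [hbl.1, hbl.2]
  have hrevval := value a.reverse h2r
  rw [hrevval, r1, r2]
  -- now show -(d2 a).1 = lam'
  set b := (d2 a).1 with hbdef
  have hdet := det_eq a
  -- c * (-b) ≡ 1 [mod A]
  have hc1 : mu ∣ c * (-b) - 1 := by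
    refine ⟨-(d2 a).2, ?_⟩
    rw [← hAmu]
    nlinarith [hdet]
  have hc2 : mu ∣ lam * lam' - 1 := Int.ModEq.dvd hcong.symm
  have hkey : mu ∣ lam' - (-b) := by
    have h3 : mu ∣ lam * (lam' - (-b)) := by
      have : lam * (lam' - (-b)) = (lam * lam' - 1) - (c * (-b) - 1) := by
        rw [hlamc]; ring
      rw [this]
      exact dvd_sub hc2 hc1
    exact hco.symm.dvd_of_dvd_mul_left h3
  have hnbpos : 0 < -b := by rw [← r2]; exact hposr
  have hnblt : -b < mu := by rw [← hAmu, hAdef, ← r2, ← r1]; exact hbr.2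
  have hzero : lam' - (-b) = 0 := by
    rcases hkey with ⟨k, hk⟩
    have hk0 : k = 0 := by nlinarith
    rw [hk, hk0, mul_zero]
  have : -b = lam' := by linarith
  rw [this, ← hAdef, hAmu]
end

section
/- Let a₁, …, a_j and b₁, …, b_r be integers, all ≥ 2, such that [a₁, …, a_j] + [b₁, …, b_r] = 1. Then the reversed continued fractions satisfy [a_j, …, a₁] + [b_r, …, b₁] = 1. -/
/-- Continuant matrix `[[p, r], [q, s]]` of a list, stored as `(p, q, r, s)`. -/
def cfm : List ℤ → ℤ × ℤ × ℤ × ℤ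
  | [] => (1, 0, 0, 1)
  | e :: t =>
    (e * (cfm t).1 - (cfm t).2.1, (cfm t).1,
     e * (cfm t).2.2.1 - (cfm t).2.2.2, (cfm t).2.2.1)

lemma cfm_cons (e : ℤ) (t : List ℤ) :
    cfm (e :: t) =
      (e * (cfm t).1 - (cfm t).2.1, (cfm t).1,
       e * (cfm t).2.2.1 - (cfm t).2.2.2, (cfm t).2.2.1) := rfl

lemma cfm_det (l : List ℤ) :
    (cfm l).1 * (cfm l).2.2.2 - (cfm l).2.1 * (cfm l).2.2.1 = 1 := by
  induction l with
  | nil => simp [cfm]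
  | cons e t ih => rw [cfm_cons]; dsimp only; ring_nf; ring_nf at ih; linarith [ih]

/-- Positivity: for lists with entries ≥ 2, `0 ≤ q < p`. -/
lemma cfm_pos (l : List ℤ) (h2 : ∀ e ∈ l, 2 ≤ e) :
    0 ≤ (cfm l).2.1 ∧ (cfm l).2.1 < (cfm l).1 := by
  induction l with
  | nil => simp [cfm]
  | cons e t ih =>
    have he : 2 ≤ e := h2 e (by simp)
    have ih' := ih (fun x hx => h2 x (by simp [hx]))
    rw [cfm_cons]; dsimp only
    constructor
    · linarith [ih'.1, ih'.2]
    · nlinarith [ih'.1, ih'.2]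

lemma cfm_q_pos (l : List ℤ) (hl : l ≠ []) (h2 : ∀ e ∈ l, 2 ≤ e) :
    1 ≤ (cfm l).2.1 := by
  cases l with
  | nil => exact absurd rfl hl
  | cons e t =>
    have := cfm_pos t (fun x hx => h2 x (by simp [hx]))
    rw [cfm_cons]; dsimp only; linarith [this.1, this.2]

lemma hjcf_eq (l : List ℤ) (h2 : ∀ e ∈ l, 2 ≤ e) :
    hjcf l = ((cfm l).2.1 : ℚ) / ((cfm l).1 : ℚ) := by
  induction l with
  | nil => simp [hjcf, cfm]
  | cons e t ih =>
    have ih' := ih (fun x hx => h2 x (by simp [hx]))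
    have hpt := cfm_pos t (fun x hx => h2 x (by simp [hx]))
    have hp : (0 : ℤ) < (cfm t).1 := by linarith [hpt.1, hpt.2]
    have hpc := cfm_pos (e :: t) h2
    have hpc' : (0 : ℤ) < (cfm (e :: t)).1 := by linarith [hpc.1, hpc.2]
    rw [cfm_cons] at hpc' ⊢
    dsimp only at hpc' ⊢
    rw [hjcf, ih']
    have h1 : ((cfm t).1 : ℚ) ≠ 0 := Int.cast_ne_zero.mpr hp.ne'
    have h2' : ((e * (cfm t).1 - (cfm t).2.1 : ℤ) : ℚ) ≠ 0 :=
      Int.cast_ne_zero.mpr hpc'.ne'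
    push_cast at h2' ⊢
    field_simp

lemma cfm_append (l : List ℤ) (e : ℤ) :
    cfm (l ++ [e]) =
      (e * (cfm l).1 + (cfm l).2.2.1, e * (cfm l).2.1 + (cfm l).2.2.2,
       -(cfm l).1, -(cfm l).2.1) := by
  induction l with
  | nil => simp [cfm]
  | cons f t ih =>
    rw [List.cons_append, cfm_cons, ih, cfm_cons]
    dsimp only
    refine Prod.ext (by ring) (Prod.ext (by ring) (Prod.ext (by ring) (by ring)))

lemma cfm_reverse (l : List ℤ) :
    cfm l.reverse =
      ((cfm l).1, -(cfm l).2.2.1, -(cfm l).2.1, (cfm l).2.2.2) := by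
  induction l with
  | nil => simp [cfm]
  | cons e t ih =>
    rw [List.reverse_cons, cfm_append, ih, cfm_cons]
    dsimp only
    refine Prod.ext (by ring) (Prod.ext (by ring) (Prod.ext (by ring) (by ring)))

/-- If [a₁, …, a_j] + [b₁, …, b_r] = 1 with all entries ≥ 2, then the same
holds for the reversed continued fractions. -/
theorem hjcf_reverse_sum_one (a b : List ℤ) (ha : a ≠ []) (hb : b ≠ [])
    (h2a : ∀ e ∈ a, 2 ≤ e) (h2b : ∀ e ∈ b, 2 ≤ e)
    (hsum : hjcf a + hjcf b = 1) :
    hjcf a.reverse + hjcf b.reverse = 1 := by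
  have h2a' : ∀ e ∈ a.reverse, 2 ≤ e := fun e he => h2a e (List.mem_reverse.mp he)
  have h2b' : ∀ e ∈ b.reverse, 2 ≤ e := fun e he => h2b e (List.mem_reverse.mp he)
  set pa := (cfm a).1 with hpa_def
  set qa := (cfm a).2.1 with hqa_def
  set ra := (cfm a).2.2.1 with hra_def
  set sa := (cfm a).2.2.2 with hsa_def
  set pb := (cfm b).1 with hpb_def
  set qb := (cfm b).2.1 with hqb_def
  set rb := (cfm b).2.2.1 with hrb_def
  set sb := (cfm b).2.2.2 with hsb_def
  have hda : pa * sa - qa * ra = 1 := cfm_det a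
  have hdb : pb * sb - qb * rb = 1 := cfm_det b
  have hposa := cfm_pos a h2a
  have hposb := cfm_pos b h2b
  have hq1a : 1 ≤ qa := cfm_q_pos a ha h2a
  have hq1b : 1 ≤ qb := cfm_q_pos b hb h2b
  have hpa2 : 2 ≤ pa := by linarith [hposa.2]
  have hpb2 : 2 ≤ pb := by linarith [hposb.2]
  have hpaQ : (pa : ℚ) ≠ 0 := Int.cast_ne_zero.mpr (by omega)
  have hpbQ : (pb : ℚ) ≠ 0 := Int.cast_ne_zero.mpr (by omega)
  have hsQ : (qa : ℚ) / pa + (qb : ℚ) / pb = 1 := by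
    rw [hjcf_eq a h2a, hjcf_eq b h2b] at hsum; exact hsum
  have hZ : qa * pb + qb * pa = pa * pb := by
    field_simp at hsQ
    rw [mul_comm qb pa]; exact_mod_cast hsQ
  have hcopa : IsCoprime pa qa := ⟨sa, -ra, by linarith [hda]⟩
  have hcopb : IsCoprime pb qb := ⟨sb, -rb, by linarith [hdb]⟩
  have hd1 : pa ∣ pb := hcopa.dvd_of_dvd_mul_left ⟨pb - qb, by linarith⟩
  have hd2 : pb ∣ pa := hcopb.dvd_of_dvd_mul_left ⟨pa - qa, by linarith⟩
  have hpp : pa = pb := Int.dvd_antisymm (by omega) (by omega) hd1 hd2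
  have hqs : qa + qb = pa := by
    have h0 : pa * (qa + qb) = pa * pa := by rw [hpp] at hZ ⊢; linarith
    exact mul_left_cancel₀ (by omega) h0
  -- bounds on the reversed numerators
  have hrpa := cfm_pos a.reverse h2a'
  rw [cfm_reverse] at hrpa
  have hrq1a := cfm_q_pos a.reverse (by simpa using ha) h2a'
  rw [cfm_reverse] at hrq1a
  have hrpb := cfm_pos b.reverse h2b'
  rw [cfm_reverse] at hrpb
  have hrq1b := cfm_q_pos b.reverse (by simpa using hb) h2b'
  rw [cfm_reverse] at hrq1b
  dsimp only at hrpa hrq1a hrpb hrq1b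
  -- the key divisibility
  have hkey : qa * (-ra + -rb) = pa * (-rb + sb - sa) := by
    linear_combination hda - hdb - rb * hqs - sb * hpp
  have hdvd : pa ∣ (-ra + -rb) :=
    hcopa.dvd_of_dvd_mul_left ⟨-rb + sb - sa, by linarith⟩
  obtain ⟨k, hk⟩ := hdvd
  have hk1 : k = 1 := by nlinarith [hrpa.2, hrq1a, hrpb.2, hrq1b, hpp]
  have hfin : -ra + -rb = pa := by rw [hk, hk1, mul_one]
  rw [hjcf_eq a.reverse h2a', hjcf_eq b.reverse h2b', cfm_reverse, cfm_reverse]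
  dsimp only
  rw [← hpa_def, ← hra_def, ← hpb_def, ← hrb_def, ← hpp]
  rw [← add_div]
  rw [div_eq_one_iff_eq hpaQ]
  exact_mod_cast hfin
end

section
/- With E, F, S, G, Q, c, C₁, C₂, λ₀, λ₁, λ₂, x and T_x as in the context, the map T_x sends the closed ball B̄ = { y ∈ F : ‖y‖ ≤ λ₂/(C₁C₂²) } into itself, and for all y, y′ ∈ B̄ one has ‖T_x(y) − T_x(y′)‖ ≤ 2(λ₁ + λ₂)·‖y − y′‖; in particular T_x is a contraction of B̄. -/
/-- The map `T_x y = −c − Q(x + G y)` sends the closed ball of radius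
λ₂/(C₁C₂²) in F into itself and is Lipschitz there with constant
2(λ₁ + λ₂) < 1, hence a contraction. -/
theorem contraction_Tx
    {E F : Type*} [NormedAddCommGroup E] [NormedSpace ℝ E] [CompleteSpace E]
    [NormedAddCommGroup F] [NormedSpace ℝ F] [CompleteSpace F]
    (S : E →L[ℝ] F) (G : F →L[ℝ] E) (Q : E → F) (c : F)
    (C₁ C₂ lam₀ lam₁ lam₂ : ℝ)
    (hC₁ : 0 < C₁) (hC₂ : 0 < C₂)
    (hSG : ∀ y : F, S (G y) = y) (hGnorm : ‖G‖ ≤ C₂)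
    (hQ0 : Q 0 = 0)
    (hQ : ∀ a b : E, ‖Q a - Q b‖ ≤ C₁ * (‖a‖ + ‖b‖) * ‖a - b‖)
    (hl₀ : 0 < lam₀) (hl₁ : 0 < lam₁) (hl₂ : 0 < lam₂)
    (hsum : lam₀ + (lam₁ + lam₂) ^ 2 ≤ lam₂)
    (hhalf : lam₁ + lam₂ < 1 / 2)
    (hc : ‖c‖ ≤ lam₀ / (C₁ * C₂ ^ 2))
    (x : E) (hx : S x = 0) (hxn : ‖x‖ ≤ lam₁ / (C₁ * C₂)) :
    (∀ y : F, ‖y‖ ≤ lam₂ / (C₁ * C₂ ^ 2) →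
      ‖-c - Q (x + G y)‖ ≤ lam₂ / (C₁ * C₂ ^ 2)) ∧
    (∀ y y' : F, ‖y‖ ≤ lam₂ / (C₁ * C₂ ^ 2) → ‖y'‖ ≤ lam₂ / (C₁ * C₂ ^ 2) →
      ‖(-c - Q (x + G y)) - (-c - Q (x + G y'))‖ ≤
        2 * (lam₁ + lam₂) * ‖y - y'‖) := by
  have hG : ∀ y : F, ‖G y‖ ≤ C₂ * ‖y‖ := fun y =>
    (G.le_opNorm y).trans (by gcongr)
  have key : ∀ y : F, ‖y‖ ≤ lam₂ / (C₁ * C₂ ^ 2) →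
      ‖x + G y‖ ≤ (lam₁ + lam₂) / (C₁ * C₂) := by
    intro y hy
    calc ‖x + G y‖ ≤ ‖x‖ + ‖G y‖ := norm_add_le _ _
      _ ≤ lam₁ / (C₁ * C₂) + C₂ * (lam₂ / (C₁ * C₂ ^ 2)) := by
          have := hG y
          have : ‖G y‖ ≤ C₂ * (lam₂ / (C₁ * C₂ ^ 2)) :=
            this.trans (by gcongr)
          linarith
      _ = (lam₁ + lam₂) / (C₁ * C₂) := by field_simp
  constructor
  · intro y hy
    have hQy : ‖Q (x + G y)‖ ≤ C₁ * ((lam₁ + lam₂) / (C₁ * C₂)) ^ 2 := by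
      have h1 := hQ (x + G y) 0
      rw [hQ0, sub_zero, sub_zero, norm_zero, add_zero] at h1
      calc ‖Q (x + G y)‖ ≤ C₁ * ‖x + G y‖ * ‖x + G y‖ := h1
        _ ≤ C₁ * ((lam₁ + lam₂) / (C₁ * C₂)) * ((lam₁ + lam₂) / (C₁ * C₂)) := by
            have := key y hy
            gcongr <;> positivity
        _ = C₁ * ((lam₁ + lam₂) / (C₁ * C₂)) ^ 2 := by ring
    have h2 : ‖-c - Q (x + G y)‖ ≤ ‖c‖ + ‖Q (x + G y)‖ := by
      calc ‖-c - Q (x + G y)‖ ≤ ‖-c‖ + ‖Q (x + G y)‖ := norm_sub_le _ _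
        _ = ‖c‖ + ‖Q (x + G y)‖ := by rw [norm_neg]
    have heq : C₁ * ((lam₁ + lam₂) / (C₁ * C₂)) ^ 2 = (lam₁ + lam₂) ^ 2 / (C₁ * C₂ ^ 2) := by
      field_simp
    rw [heq] at hQy
    have : lam₀ / (C₁ * C₂ ^ 2) + (lam₁ + lam₂) ^ 2 / (C₁ * C₂ ^ 2) ≤ lam₂ / (C₁ * C₂ ^ 2) := by
      rw [← add_div]
      gcongr
    linarith
  · intro y y' hy hy'
    have heq : -c - Q (x + G y) - (-c - Q (x + G y')) = Q (x + G y') - Q (x + G y) := by abel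
    rw [heq]
    calc ‖Q (x + G y') - Q (x + G y)‖
        ≤ C₁ * (‖x + G y'‖ + ‖x + G y‖) * ‖(x + G y') - (x + G y)‖ := hQ _ _
      _ = C₁ * (‖x + G y'‖ + ‖x + G y‖) * ‖G (y' - y)‖ := by
          congr 2
          rw [map_sub]; abel_nf
      _ ≤ C₁ * ((lam₁ + lam₂) / (C₁ * C₂) + (lam₁ + lam₂) / (C₁ * C₂)) * (C₂ * ‖y' - y‖) := by
          have h1 := key y hy
          have h2 := key y' hy'
          have h3 := hG (y' - y)
          gcongr <;> positivity
      _ = 2 * (lam₁ + lam₂) * ‖y' - y‖ := by field_simp; ring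
      _ = 2 * (lam₁ + lam₂) * ‖y - y'‖ := by rw [norm_sub_rev]
end

section
/- With E, F, S, G, Q, c, C₁, C₂, λ₀, λ₁, λ₂, x and T_x as in the context, there exists a unique y in the closed ball B̄ = { y ∈ F : ‖y‖ ≤ λ₂/(C₁C₂²) } with y = −c − Q(x + G y). For this y one has c + S(x + G y) + Q(x + G y) = 0 (so x + G y is a zero of the map a ↦ c + S a + Q(a)), and ‖y‖ ≤ (‖c‖ + C₁‖x‖²)/(1 − 2(λ₁ + λ₂)). -/
set_option maxHeartbeats 1000000


/-- There is a unique fixed point `y = T_x y = −c − Q(x + G y)` in the closed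
ball of radius λ₂/(C₁C₂²); for this y, `x + G y` is a zero of
`a ↦ c + S a + Q a`, and ‖y‖ ≤ (‖c‖ + C₁‖x‖²)/(1 − 2(λ₁ + λ₂)). -/
theorem fixed_point_Tx
    {E F : Type*} [NormedAddCommGroup E] [NormedSpace ℝ E] [CompleteSpace E]
    [NormedAddCommGroup F] [NormedSpace ℝ F] [CompleteSpace F]
    (S : E →L[ℝ] F) (G : F →L[ℝ] E) (Q : E → F) (c : F)
    (C₁ C₂ lam₀ lam₁ lam₂ : ℝ)
    (hC₁ : 0 < C₁) (hC₂ : 0 < C₂)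
    (hSG : ∀ y : F, S (G y) = y) (hGnorm : ‖G‖ ≤ C₂)
    (hQ0 : Q 0 = 0)
    (hQ : ∀ a b : E, ‖Q a - Q b‖ ≤ C₁ * (‖a‖ + ‖b‖) * ‖a - b‖)
    (hl₀ : 0 < lam₀) (hl₁ : 0 < lam₁) (hl₂ : 0 < lam₂)
    (hsum : lam₀ + (lam₁ + lam₂) ^ 2 ≤ lam₂)
    (hhalf : lam₁ + lam₂ < 1 / 2)
    (hc : ‖c‖ ≤ lam₀ / (C₁ * C₂ ^ 2))
    (x : E) (hx : S x = 0) (hxn : ‖x‖ ≤ lam₁ / (C₁ * C₂)) :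
    ∃ y : F, (‖y‖ ≤ lam₂ / (C₁ * C₂ ^ 2) ∧ y = -c - Q (x + G y)) ∧
      (∀ z : F, ‖z‖ ≤ lam₂ / (C₁ * C₂ ^ 2) → z = -c - Q (x + G z) → z = y) ∧
      c + S (x + G y) + Q (x + G y) = 0 ∧
      ‖y‖ ≤ (‖c‖ + C₁ * ‖x‖ ^ 2) / (1 - 2 * (lam₁ + lam₂)) := by
  have hCC : (0:ℝ) < C₁ * C₂ ^ 2 := by positivity
  have hCC' : (0:ℝ) < C₁ * C₂ := by positivity
  set r : ℝ := lam₂ / (C₁ * C₂ ^ 2) with hrdef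
  have hrpos : 0 < r := by positivity
  set k : ℝ := 2 * (lam₁ + lam₂) with hkdef
  have hk0 : 0 ≤ k := by positivity
  have hk1 : k < 1 := by rw [hkdef]; linarith
  set T : F → F := fun y => -c - Q (x + G y) with hTdef
  have hc' : ‖c‖ * (C₁ * C₂ ^ 2) ≤ lam₀ := (le_div_iff₀ hCC).mp hc
  have hxn' : ‖x‖ * (C₁ * C₂) ≤ lam₁ := (le_div_iff₀ hCC').mp hxn
  -- bound on G y
  have hGy : ∀ y : F, ‖G y‖ ≤ C₂ * ‖y‖ := fun y =>
    (G.le_opNorm y).trans (mul_le_mul_of_nonneg_right hGnorm (norm_nonneg y))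
  -- norm of argument
  have harg : ∀ y : F, ‖x + G y‖ ≤ ‖x‖ + C₂ * ‖y‖ := fun y =>
    (norm_add_le _ _).trans (by linarith [hGy y])
  -- T maps the ball to itself
  have hmap : ∀ y : F, ‖y‖ ≤ r → ‖T y‖ ≤ r := by
    intro y hy
    have hy' : ‖y‖ * (C₁ * C₂ ^ 2) ≤ lam₂ := (le_div_iff₀ hCC).mp hy
    have h1 := hQ (x + G y) 0
    rw [hQ0, sub_zero, sub_zero, norm_zero, add_zero] at h1
    have hTy : ‖T y‖ ≤ ‖c‖ + C₁ * (‖x + G y‖ * ‖x + G y‖) := by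
      calc ‖T y‖ ≤ ‖-c‖ + ‖Q (x + G y)‖ := norm_sub_le _ _
        _ ≤ ‖c‖ + C₁ * (‖x + G y‖ * ‖x + G y‖) := by
            rw [norm_neg]; nlinarith [h1]
    have haa : C₁ * C₂ * ‖x + G y‖ ≤ lam₁ + lam₂ := by
      have := mul_le_mul_of_nonneg_left (harg y) (le_of_lt hCC')
      nlinarith [hy']
    have hsq : (C₁ * C₂ * ‖x + G y‖) * (C₁ * C₂ * ‖x + G y‖) ≤ (lam₁ + lam₂) * (lam₁ + lam₂) :=
      mul_self_le_mul_self (by positivity) haa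
    rw [hrdef, le_div_iff₀ hCC]
    have hsq2 : (lam₁ + lam₂) ^ 2 = (lam₁ + lam₂) * (lam₁ + lam₂) := sq (lam₁ + lam₂) ▸ rfl
    calc ‖T y‖ * (C₁ * C₂ ^ 2)
        ≤ (‖c‖ + C₁ * (‖x + G y‖ * ‖x + G y‖)) * (C₁ * C₂ ^ 2) :=
          mul_le_mul_of_nonneg_right hTy (le_of_lt hCC)
      _ = ‖c‖ * (C₁ * C₂ ^ 2) + (C₁ * C₂ * ‖x + G y‖) * (C₁ * C₂ * ‖x + G y‖) := by ring
      _ ≤ lam₀ + (lam₁ + lam₂) * (lam₁ + lam₂) := by linarith [hc', hsq]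
      _ ≤ lam₂ := by nlinarith [hsum]
  -- contraction estimate
  have hcontr : ∀ y z : F, ‖y‖ ≤ r → ‖z‖ ≤ r → ‖T y - T z‖ ≤ k * ‖y - z‖ := by
    intro y z hy hz
    have hy' : ‖y‖ * (C₁ * C₂ ^ 2) ≤ lam₂ := (le_div_iff₀ hCC).mp hy
    have hz' : ‖z‖ * (C₁ * C₂ ^ 2) ≤ lam₂ := (le_div_iff₀ hCC).mp hz
    have hTsub : T y - T z = Q (x + G z) - Q (x + G y) := by
      simp only [hTdef]; abel
    have h1 := hQ (x + G z) (x + G y)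
    have hsub : (x + G z) - (x + G y) = G (z - y) := by rw [map_sub]; abel
    rw [hsub] at h1
    have h2 : ‖G (z - y)‖ ≤ C₂ * ‖y - z‖ := by
      calc ‖G (z - y)‖ = ‖G (-(y - z))‖ := by rw [neg_sub]
        _ = ‖G (y - z)‖ := by rw [map_neg, norm_neg]
        _ ≤ C₂ * ‖y - z‖ := hGy _
    have hB : C₁ * C₂ * (‖x + G z‖ + ‖x + G y‖) ≤ k := by
      have h3 := mul_le_mul_of_nonneg_left (harg y) (le_of_lt hCC')
      have h4 := mul_le_mul_of_nonneg_left (harg z) (le_of_lt hCC')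
      rw [hkdef]; nlinarith [hy', hz', hxn']
    rw [hTsub]
    calc ‖Q (x + G z) - Q (x + G y)‖ ≤ C₁ * (‖x + G z‖ + ‖x + G y‖) * ‖G (z - y)‖ := h1
      _ ≤ C₁ * (‖x + G z‖ + ‖x + G y‖) * (C₂ * ‖y - z‖) := by
          apply mul_le_mul_of_nonneg_left h2
          positivity
      _ = (C₁ * C₂ * (‖x + G z‖ + ‖x + G y‖)) * ‖y - z‖ := by ring
      _ ≤ k * ‖y - z‖ := mul_le_mul_of_nonneg_right hB (norm_nonneg _)
  -- Banach fixed point on the closed ball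
  set s : Set F := Metric.closedBall 0 r with hsdef
  have hmem : ∀ y : F, y ∈ s ↔ ‖y‖ ≤ r := by
    intro y; rw [hsdef, Metric.mem_closedBall, dist_zero_right]
  haveI : CompleteSpace s := Metric.isClosed_closedBall.completeSpace_coe
  haveI : Nonempty s := ⟨⟨0, by rw [hmem]; simpa using le_of_lt hrpos⟩⟩
  set f : s → s := fun p => ⟨T p, (hmem _).mpr (hmap p ((hmem _).mp p.2))⟩ with hfdef
  have hcw : ContractingWith k.toNNReal f := by
    constructor
    · simpa [Real.toNNReal_lt_one] using hk1
    · apply LipschitzWith.of_dist_le_mul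
      intro a b
      simp only [Subtype.dist_eq, dist_eq_norm, Real.coe_toNNReal k hk0]
      exact hcontr a b ((hmem _).mp a.2) ((hmem _).mp b.2)
  set y₀ : s := hcw.fixedPoint f with hy₀def
  have hfix : f y₀ = y₀ := hcw.fixedPoint_isFixedPt
  set y : F := (y₀ : F) with hydef
  have hyr : ‖y‖ ≤ r := (hmem _).mp y₀.2
  have hyeq : y = -c - Q (x + G y) := by
    have h : T y = y := congrArg (Subtype.val) hfix
    exact h.symm
  refine ⟨y, ⟨hyr, hyeq⟩, ?_, ?_, ?_⟩
  · intro z hz hzeq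
    have h5 : ‖z - y‖ ≤ k * ‖z - y‖ := by
      calc ‖z - y‖ = ‖T z - T y‖ := by
            rw [hTdef]; simp only []; rw [← hzeq, ← hyeq]
        _ ≤ k * ‖z - y‖ := hcontr z y hz hyr
    have : (1 - k) * ‖z - y‖ ≤ 0 := by nlinarith
    have hzy : ‖z - y‖ = 0 := le_antisymm (by nlinarith [norm_nonneg (z - y)]) (norm_nonneg _)
    exact sub_eq_zero.mp (norm_eq_zero.mp hzy)
  · have hS : S (x + G y) = y := by rw [map_add, hx, hSG, zero_add]
    rw [hS]
    nth_rewrite 1 [hyeq]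
    abel
  · have h1 := hQ (x + G y) x
    have : (x + G y) - x = G y := by abel
    rw [this] at h1
    have hQx : ‖Q x‖ ≤ C₁ * (‖x‖ * ‖x‖) := by
      have h2 := hQ x 0
      rw [hQ0, sub_zero, sub_zero, norm_zero, add_zero] at h2
      nlinarith [h2]
    have hy' : ‖y‖ * (C₁ * C₂ ^ 2) ≤ lam₂ := (le_div_iff₀ hCC).mp hyr
    have hB : C₁ * (‖x + G y‖ + ‖x‖) * ‖G y‖ ≤ k * ‖y‖ := by
      have h3 := mul_le_mul_of_nonneg_left (harg y) (le_of_lt hCC')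
      have h4 := hGy y
      rw [hkdef]
      nlinarith [norm_nonneg y, norm_nonneg (G y), norm_nonneg (x + G y), hxn',
        mul_le_mul (harg y) h4 (norm_nonneg _) (by positivity : (0:ℝ) ≤ ‖x‖ + C₂ * ‖y‖)]
    have hTy : ‖y‖ ≤ ‖c‖ + C₁ * (‖x‖ * ‖x‖) + k * ‖y‖ := by
      calc ‖y‖ = ‖-c - Q (x + G y)‖ := by rw [← hyeq]
        _ ≤ ‖-c‖ + ‖Q (x + G y)‖ := norm_sub_le _ _
        _ ≤ ‖c‖ + (‖Q x‖ + ‖Q (x + G y) - Q x‖) := by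
            rw [norm_neg]
            have := norm_add_le (Q x) (Q (x + G y) - Q x)
            simp only [add_sub_cancel] at this
            linarith
        _ ≤ ‖c‖ + C₁ * (‖x‖ * ‖x‖) + k * ‖y‖ := by linarith [h1.trans hB]
    rw [le_div_iff₀ (by linarith [hhalf] : (0:ℝ) < 1 - 2 * (lam₁ + lam₂))]
    nlinarith [hTy, mul_le_mul_of_nonneg_right (le_of_eq hkdef) (norm_nonneg y)]
end

section
/- With the data of the context, there exist constants C > 0 and R₀ > 0 such that for all R ≥ R₀ and all θ ∈ [0, π/2], ‖v₂(R, θ) − [(cos 2θ / 2)·w_{k+1} − (1/2)·∑_{j=0}^{k} w_j]‖ ≤ C·R⁻². -/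
/-- Key scalar bound: if `a ≤ -(m/2)` and `t² ≤ 1/R⁴` with `R ≥ 1`, then the
coefficient `a/√(t²+a²)` is within `2/(m²R²)` of `-1`. -/
lemma coeff_bound (m t a R : ℝ) (hm : 0 < m) (hR : 1 ≤ R)
    (ht : t ^ 2 ≤ 1 / R ^ 4) (ha : a ≤ -(m / 2)) :
    |a / Real.sqrt (t ^ 2 + a ^ 2) + 1| ≤ 2 / (m ^ 2 * R ^ 2) := by
  have hR0 : (0 : ℝ) < R := lt_of_lt_of_le one_pos hR
  have ha0 : a < 0 := lt_of_le_of_lt ha (by nlinarith)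
  set r := Real.sqrt (t ^ 2 + a ^ 2) with hrdef
  have hr2 : r ^ 2 = t ^ 2 + a ^ 2 := Real.sq_sqrt (by positivity)
  have hra : -a ≤ r := by
    rw [hrdef, Real.le_sqrt (by linarith)]
    · nlinarith
    · positivity
  have hr0 : 0 < r := lt_of_lt_of_le (by linarith) hra
  have hnonneg : 0 ≤ a / r + 1 := by
    have h : -a / r ≤ 1 := by rw [div_le_one hr0]; exact hra
    have : -(1 : ℝ) ≤ a / r := by rw [neg_div] at h; linarith
    linarith
  rw [abs_of_nonneg hnonneg]
  have heq : a / r + 1 = (r + a) / r := by field_simp; ring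
  rw [heq]
  have h1 : (r + a) * (r - a) = t ^ 2 := by nlinarith [hr2]
  have h2 : m ≤ r - a := by linarith
  have h3 : m / 2 ≤ r := by linarith
  have h5 : 0 ≤ r + a := by linarith
  have h4 : r + a ≤ t ^ 2 / m := by
    rw [le_div_iff₀ hm]; nlinarith
  have h6 : (r + a) / r ≤ (t ^ 2 / m) / (m / 2) :=
    div_le_div₀ (by positivity) h4 (by linarith) h3
  calc (r + a) / r ≤ (t ^ 2 / m) / (m / 2) := h6
    _ = 2 * t ^ 2 / m ^ 2 := by field_simp
    _ ≤ 2 * (1 / R ^ 4) / m ^ 2 := by gcongr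
    _ ≤ 2 / (m ^ 2 * R ^ 2) := by
        have hR2 : (1 : ℝ) ≤ R ^ 2 := by nlinarith
        rw [show 2 * (1 / R ^ 4) / m ^ 2 = 2 / (m ^ 2 * R ^ 4) from by ring]
        gcongr
        · norm_num

/-- Asymptotics of v₂:
v₂(R,θ) = (cos 2θ / 2)·w_{k+1} − (1/2)·∑_{j=0}^k w_j + O(R⁻²) uniformly in
θ ∈ [0, π/2]. -/
theorem v2_asymptotics (k : ℕ) (y : ℕ → ℝ)
    (hy_pos : 0 < y k) (hy_dec : ∀ i, i < k → y (i + 1) < y i)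
    (hy_last : y (k + 1) = 0)
    (w : ℕ → ℝ × ℝ)
    (v₂ : ℝ → ℝ → ℝ × ℝ)
    (hv₂ : ∀ R θ : ℝ, v₂ R θ =
      (1 / 2 : ℝ) •
        ∑ j ∈ Finset.range (k + 2),
          ((Real.cos (2 * θ) / R ^ 2 - y j) /
            Real.sqrt ((Real.sin (2 * θ) / R ^ 2) ^ 2 +
              (Real.cos (2 * θ) / R ^ 2 - y j) ^ 2)) • w j) :
    ∃ C > (0 : ℝ), ∃ R₀ > (0 : ℝ), ∀ R : ℝ, R₀ ≤ R →
      ∀ θ ∈ Set.Icc (0 : ℝ) (Real.pi / 2),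
        ‖v₂ R θ - ((Real.cos (2 * θ) / 2) • w (k + 1) -
          (1 / 2 : ℝ) • ∑ j ∈ Finset.range (k + 1), w j)‖ ≤ C / R ^ 2 := by
  set m := y k with hmdef
  have hm : 0 < m := hy_pos
  have hmono : ∀ j, j ≤ k → m ≤ y j := by
    have key : ∀ j, j ≤ k → ∀ i, i ≤ j → y j ≤ y i := by
      intro j
      induction j with
      | zero => intro _ i hi; interval_cases i; exact le_refl _
      | succ n ih =>
        intro hjk i hi
        rcases Nat.eq_or_lt_of_le hi with h | h
        · rw [h]
        · have h1 : y (n + 1) < y n := hy_dec n (by omega)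
          exact le_of_lt (lt_of_lt_of_le h1 (ih (by omega) i (by omega)))
    intro j hj
    exact key k le_rfl j hj
  set S := ∑ j ∈ Finset.range (k + 1), ‖w j‖ with hS
  have hS0 : 0 ≤ S := Finset.sum_nonneg fun j _ => norm_nonneg _
  refine ⟨2 * S / m ^ 2 + 1, by positivity, max 1 (Real.sqrt (2 / m)), by positivity, ?_⟩
  intro R hR θ hθ
  have hR1 : (1 : ℝ) ≤ R := le_trans (le_max_left _ _) hR
  have hR0 : (0 : ℝ) < R := lt_of_lt_of_le one_pos hR1
  have hRs : Real.sqrt (2 / m) ≤ R := le_trans (le_max_right _ _) hR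
  have hRm : 2 / m ≤ R ^ 2 := by
    have h := Real.sq_sqrt (le_of_lt (by positivity : (0:ℝ) < 2 / m))
    nlinarith [Real.sqrt_nonneg (2 / m)]
  have hinv : 1 / R ^ 2 ≤ m / 2 := by
    rw [div_le_div_iff₀ (by positivity) two_pos]
    rw [div_le_iff₀ hm] at hRm
    nlinarith
  have hsq : Real.sqrt ((Real.sin (2 * θ) / R ^ 2) ^ 2 + (Real.cos (2 * θ) / R ^ 2) ^ 2)
      = 1 / R ^ 2 := by
    have hsc := Real.sin_sq_add_cos_sq (2 * θ)
    have h : (Real.sin (2 * θ) / R ^ 2) ^ 2 + (Real.cos (2 * θ) / R ^ 2) ^ 2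
        = (1 / R ^ 2) ^ 2 := by
      field_simp
      exact hsc
    rw [h, Real.sqrt_sq (by positivity)]
  have key : v₂ R θ - ((Real.cos (2 * θ) / 2) • w (k + 1) -
      (1 / 2 : ℝ) • ∑ j ∈ Finset.range (k + 1), w j)
      = (1 / 2 : ℝ) • ∑ j ∈ Finset.range (k + 1),
          ((Real.cos (2 * θ) / R ^ 2 - y j) /
            Real.sqrt ((Real.sin (2 * θ) / R ^ 2) ^ 2 +
              (Real.cos (2 * θ) / R ^ 2 - y j) ^ 2) + 1) • w j := by
    rw [hv₂, Finset.sum_range_succ, hy_last]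
    have hlast : (Real.cos (2 * θ) / R ^ 2 - 0) /
        Real.sqrt ((Real.sin (2 * θ) / R ^ 2) ^ 2 + (Real.cos (2 * θ) / R ^ 2 - 0) ^ 2)
        = Real.cos (2 * θ) := by
      rw [sub_zero, hsq]
      field_simp
    rw [hlast]
    simp only [add_smul, one_smul, Finset.sum_add_distrib]
    module
  rw [key]
  have hbound : ∀ j ∈ Finset.range (k + 1),
      |(Real.cos (2 * θ) / R ^ 2 - y j) /
        Real.sqrt ((Real.sin (2 * θ) / R ^ 2) ^ 2 +
          (Real.cos (2 * θ) / R ^ 2 - y j) ^ 2) + 1| ≤ 2 / (m ^ 2 * R ^ 2) := by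
    intro j hj
    have hjk : j ≤ k := by simpa [Nat.lt_succ_iff] using hj
    apply coeff_bound m (Real.sin (2 * θ) / R ^ 2) (Real.cos (2 * θ) / R ^ 2 - y j) R hm hR1
    · have hs : (Real.sin (2 * θ)) ^ 2 ≤ 1 := Real.sin_sq_le_one _
      rw [div_pow]
      rw [div_le_div_iff₀ (by positivity) (by positivity)]
      nlinarith [pow_pos hR0 4]
    · have hc : Real.cos (2 * θ) ≤ 1 := Real.cos_le_one _
      have h1 : Real.cos (2 * θ) / R ^ 2 ≤ 1 / R ^ 2 := by gcongr
      have h2 : m ≤ y j := hmono j hjk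
      linarith
  calc ‖(1 / 2 : ℝ) • ∑ j ∈ Finset.range (k + 1),
        ((Real.cos (2 * θ) / R ^ 2 - y j) /
          Real.sqrt ((Real.sin (2 * θ) / R ^ 2) ^ 2 +
            (Real.cos (2 * θ) / R ^ 2 - y j) ^ 2) + 1) • w j‖
      = (1 / 2 : ℝ) * ‖∑ j ∈ Finset.range (k + 1),
        ((Real.cos (2 * θ) / R ^ 2 - y j) /
          Real.sqrt ((Real.sin (2 * θ) / R ^ 2) ^ 2 +
            (Real.cos (2 * θ) / R ^ 2 - y j) ^ 2) + 1) • w j‖ := by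
        rw [norm_smul]; norm_num
    _ ≤ (1 / 2 : ℝ) * ∑ j ∈ Finset.range (k + 1),
        ‖((Real.cos (2 * θ) / R ^ 2 - y j) /
          Real.sqrt ((Real.sin (2 * θ) / R ^ 2) ^ 2 +
            (Real.cos (2 * θ) / R ^ 2 - y j) ^ 2) + 1) • w j‖ := by
        gcongr
        exact norm_sum_le _ _
    _ = (1 / 2 : ℝ) * ∑ j ∈ Finset.range (k + 1),
        |(Real.cos (2 * θ) / R ^ 2 - y j) /
          Real.sqrt ((Real.sin (2 * θ) / R ^ 2) ^ 2 +
            (Real.cos (2 * θ) / R ^ 2 - y j) ^ 2) + 1| * ‖w j‖ := by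
        simp [norm_smul, Real.norm_eq_abs]
    _ ≤ (1 / 2 : ℝ) * ∑ j ∈ Finset.range (k + 1), (2 / (m ^ 2 * R ^ 2)) * ‖w j‖ := by
        gcongr with j hj
        exact hbound j hj
    _ = (S / m ^ 2) / R ^ 2 := by
        rw [← Finset.mul_sum, ← hS]; ring
    _ ≤ (2 * S / m ^ 2 + 1) / R ^ 2 := by
        gcongr
        have h1 : 0 ≤ S / m ^ 2 := by positivity
        have h2 : 2 * S / m ^ 2 = 2 * (S / m ^ 2) := by ring
        linarith
end

section
/- With the data of the context, there exist constants C > 0 and R₀ > 0 such that for all R ≥ R₀ and all θ ∈ [0, π/2], |⟨v₁(R,θ), v₂(R,θ)⟩ + (sin 2θ / 4)·⟨w_{k+1}, ∑_{j=0}^{k} w_j⟩| ≤ C·R⁻². -/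
def symp (u v : ℝ × ℝ) : ℝ := u.1 * v.2 - u.2 * v.1

lemma symp_bound (u v : ℝ × ℝ) : |symp u v| ≤ 2 * ‖u‖ * ‖v‖ := by
  have h1 : |u.1| ≤ ‖u‖ := by simpa using norm_fst_le u
  have h2 : |u.2| ≤ ‖u‖ := by simpa using norm_snd_le u
  have h3 : |v.1| ≤ ‖v‖ := by simpa using norm_fst_le v
  have h4 : |v.2| ≤ ‖v‖ := by simpa using norm_snd_le v
  have h5 : |symp u v| ≤ |u.1| * |v.2| + |u.2| * |v.1| := by
    rw [symp]
    calc |u.1 * v.2 - u.2 * v.1| ≤ |u.1 * v.2| + |u.2 * v.1| := abs_sub _ _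
      _ = |u.1| * |v.2| + |u.2| * |v.1| := by rw [abs_mul, abs_mul]
  nlinarith [abs_nonneg u.1, abs_nonneg u.2, abs_nonneg v.1, abs_nonneg v.2,
    norm_nonneg u, norm_nonneg v]

set_option maxHeartbeats 1000000 in
/-- Asymptotics of the symplectic pairing:
⟨v₁, v₂⟩ = −(sin 2θ / 4)·⟨w_{k+1}, ∑_{j=0}^k w_j⟩ + O(R⁻²) uniformly in
θ ∈ [0, π/2]. -/
theorem symp_v1_v2_asymptotics (k : ℕ) (y : ℕ → ℝ)
    (hy_pos : 0 < y k) (hy_dec : ∀ i, i < k → y (i + 1) < y i)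
    (hy_last : y (k + 1) = 0)
    (w : ℕ → ℝ × ℝ)
    (v₁ v₂ : ℝ → ℝ → ℝ × ℝ)
    (hv₁ : ∀ R θ : ℝ, v₁ R θ =
      (Real.sin (2 * θ) / R ^ 2 / 2) •
        ∑ j ∈ Finset.range (k + 2),
          (Real.sqrt ((Real.sin (2 * θ) / R ^ 2) ^ 2 +
            (Real.cos (2 * θ) / R ^ 2 - y j) ^ 2))⁻¹ • w j)
    (hv₂ : ∀ R θ : ℝ, v₂ R θ =
      (1 / 2 : ℝ) •
        ∑ j ∈ Finset.range (k + 2),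
          ((Real.cos (2 * θ) / R ^ 2 - y j) /
            Real.sqrt ((Real.sin (2 * θ) / R ^ 2) ^ 2 +
              (Real.cos (2 * θ) / R ^ 2 - y j) ^ 2)) • w j) :
    ∃ C > (0 : ℝ), ∃ R₀ > (0 : ℝ), ∀ R : ℝ, R₀ ≤ R →
      ∀ θ ∈ Set.Icc (0 : ℝ) (Real.pi / 2),
        |symp (v₁ R θ) (v₂ R θ) +
          (Real.sin (2 * θ) / 4) *
            symp (w (k + 1)) (∑ j ∈ Finset.range (k + 1), w j)| ≤ C / R ^ 2 := by
  have mono : ∀ j, j ≤ k → y k ≤ y j := by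
    intro j hj
    have H : ∀ n, j ≤ n → n ≤ k → y n ≤ y j := by
      intro n hn
      induction n, hn using Nat.le_induction with
      | base => intro _; exact le_refl _
      | succ n hn ih =>
        intro h
        exact le_trans (le_of_lt (hy_dec n (by omega))) (ih (by omega))
    exact H k hj le_rfl
  set m := y k with hm_def
  have hm : 0 < m := hy_pos
  set W := ‖w (k + 1)‖ with hW_def
  set M := ∑ j ∈ Finset.range (k + 1), ‖w j‖ with hM_def
  set S := ∑ j ∈ Finset.range (k + 1), w j with hS_def
  have hM : 0 ≤ M := Finset.sum_nonneg fun _ _ => norm_nonneg _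
  have hW : 0 ≤ W := norm_nonneg _
  have hSM : ‖S‖ ≤ M := norm_sum_le _ _
  refine ⟨W * (M / m) + (M / m) * (W + M) + 2 * (M / m) ^ 2 + 1, by positivity,
    1 + Real.sqrt (2 / m), by positivity, ?_⟩
  intro R hR θ hθ
  have hsq : Real.sqrt (2 / m) ≤ R := by
    have : (0:ℝ) ≤ Real.sqrt (2/m) := Real.sqrt_nonneg _
    linarith
  have hR1 : (1:ℝ) ≤ R := by
    have : (0:ℝ) ≤ Real.sqrt (2/m) := Real.sqrt_nonneg _
    linarith
  have hR0 : (0:ℝ) < R := lt_of_lt_of_le one_pos hR1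
  have hR2 : (0:ℝ) < R ^ 2 := by positivity
  have hR21 : (1:ℝ) ≤ R ^ 2 := by nlinarith
  have hRm : 1 / R ^ 2 ≤ m / 2 := by
    have h2 : 2 / m ≤ R ^ 2 := by
      nlinarith [Real.sq_sqrt (show (0:ℝ) ≤ 2/m by positivity), Real.sqrt_nonneg (2/m)]
    rw [div_le_div_iff₀ hR2 two_pos]
    have := (div_le_iff₀ hm).1 h2
    nlinarith
  set s := Real.sin (2 * θ) with hs_def
  set c := Real.cos (2 * θ) with hc_def
  have hs1 : |s| ≤ 1 := Real.abs_sin_le_one (2 * θ)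
  have hc1 : |c| ≤ 1 := Real.abs_cos_le_one (2 * θ)
  set x := s / R ^ 2 with hx_def
  set u := c / R ^ 2 with hu_def
  have hx1 : |x| ≤ 1 / R ^ 2 := by
    rw [hx_def, abs_div, abs_of_pos hR2]
    gcongr
  have hu1 : |u| ≤ 1 / R ^ 2 := by
    rw [hu_def, abs_div, abs_of_pos hR2]
    gcongr
  -- the last (j = k+1) square root
  have hlast : Real.sqrt (x ^ 2 + (u - y (k + 1)) ^ 2) = (R ^ 2)⁻¹ := by
    rw [hy_last, sub_zero]
    have hpyth : x ^ 2 + u ^ 2 = ((R ^ 2)⁻¹) ^ 2 := by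
      have h := Real.sin_sq_add_cos_sq (2 * θ)
      rw [hx_def, hu_def]
      field_simp
      linarith
    rw [hpyth, Real.sqrt_sq (by positivity)]
  -- per-j bounds on the square roots, j ≤ k
  have hbj : ∀ j ∈ Finset.range (k + 1),
      m / 2 ≤ y j - u ∧ y j - u ≤ Real.sqrt (x ^ 2 + (u - y j) ^ 2) := by
    intro j hj
    have hjk : j ≤ k := by simpa using Nat.lt_succ_iff.mp (Finset.mem_range.mp hj)
    have hyj : m ≤ y j := mono j hjk
    have hu2 : u ≤ m / 2 := le_trans (le_abs_self u) (le_trans hu1 hRm)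
    constructor
    · linarith
    · calc y j - u ≤ |u - y j| := by rw [abs_sub_comm]; exact le_abs_self _
        _ = Real.sqrt ((u - y j) ^ 2) := (Real.sqrt_sq_eq_abs _).symm
        _ ≤ Real.sqrt (x ^ 2 + (u - y j) ^ 2) := Real.sqrt_le_sqrt (by nlinarith)
  have hsqrt_pos : ∀ j ∈ Finset.range (k + 1),
      (0:ℝ) < Real.sqrt (x ^ 2 + (u - y j) ^ 2) := by
    intro j hj
    have := hbj j hj
    linarith
  have hinv : ∀ j ∈ Finset.range (k + 1),
      (Real.sqrt (x ^ 2 + (u - y j) ^ 2))⁻¹ ≤ 2 / m := by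
    intro j hj
    obtain ⟨h1, h2⟩ := hbj j hj
    rw [← inv_div m 2]
    exact inv_anti₀ (by positivity) (le_trans h1 h2)
  have hgj : ∀ j ∈ Finset.range (k + 1),
      |(u - y j) / Real.sqrt (x ^ 2 + (u - y j) ^ 2) + 1| ≤ 2 / m * (1 / R ^ 2) := by
    intro j hj
    obtain ⟨h1, h2⟩ := hbj j hj
    have hsp := hsqrt_pos j hj
    set q := Real.sqrt (x ^ 2 + (u - y j) ^ 2) with hq_def
    have hub : q ≤ |x| + (y j - u) := by
      have h : x ^ 2 + (u - y j) ^ 2 ≤ (|x| + (y j - u)) ^ 2 := by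
        nlinarith [abs_nonneg x, sq_abs x]
      calc q ≤ Real.sqrt ((|x| + (y j - u)) ^ 2) := Real.sqrt_le_sqrt h
        _ = |x| + (y j - u) := Real.sqrt_sq (by
            have := abs_nonneg x
            linarith)
    have hg_eq : (u - y j) / q + 1 = (q - (y j - u)) / q := by
      rw [div_add' _ _ _ (ne_of_gt hsp)]
      ring_nf
    rw [hg_eq, abs_div, abs_of_pos hsp, abs_of_nonneg (by linarith : (0:ℝ) ≤ q - (y j - u))]
    calc (q - (y j - u)) / q ≤ |x| / q :=
          (div_le_div_iff_of_pos_right hsp).mpr (by linarith)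
      _ ≤ (1 / R ^ 2) / (m / 2) :=
          div_le_div₀ (by positivity) hx1 (by positivity) (le_trans h1 h2)
      _ = 2 / m * (1 / R ^ 2) := by field_simp; try ring
  -- decomposition of v₁ and v₂
  set T1 := ∑ j ∈ Finset.range (k + 1),
      (Real.sqrt (x ^ 2 + (u - y j) ^ 2))⁻¹ • w j with hT1_def
  set T2 := ∑ j ∈ Finset.range (k + 1),
      ((u - y j) / Real.sqrt (x ^ 2 + (u - y j) ^ 2) + 1) • w j with hT2_def
  have h1 : v₁ R θ = (s / 2) • w (k + 1) + (x / 2) • T1 := by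
    rw [hv₁, Finset.sum_range_succ]
    rw [show Real.sin (2 * θ) / R ^ 2 / 2 = x / 2 by rw [hx_def]]
    rw [← hx_def, ← hu_def, hlast, ← hT1_def]
    rw [smul_add, smul_smul, inv_inv]
    rw [show x / 2 * R ^ 2 = s / 2 by rw [hx_def]; field_simp]
    exact add_comm _ _
  have h2 : v₂ R θ = ((c / 2) • w (k + 1) - (1 / 2 : ℝ) • S) + (1 / 2 : ℝ) • T2 := by
    rw [hv₂, Finset.sum_range_succ]
    rw [← hx_def, ← hu_def, hlast, hy_last, sub_zero]
    have hterm : (u / (R ^ 2)⁻¹) • w (k + 1) = (c : ℝ) • w (k + 1) := by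
      congr 1
      rw [hu_def]
      field_simp
    have hsum : (∑ j ∈ Finset.range (k + 1),
        ((u - y j) / Real.sqrt (x ^ 2 + (u - y j) ^ 2)) • w j) = T2 - S := by
      rw [hT2_def, hS_def, ← Finset.sum_sub_distrib]
      refine Finset.sum_congr rfl fun j hj => ?_
      rw [add_smul, one_smul, add_sub_cancel_right]
    rw [hterm, hsum]
    module
  -- algebraic identity for the symplectic pairing
  have key : symp (v₁ R θ) (v₂ R θ) + s / 4 * symp (w (k + 1)) S =
      symp ((s / 2) • w (k + 1)) ((1 / 2 : ℝ) • T2) +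
      symp ((x / 2) • T1) ((c / 2) • w (k + 1) - (1 / 2 : ℝ) • S) +
      symp ((x / 2) • T1) ((1 / 2 : ℝ) • T2) := by
    rw [h1, h2]
    simp only [symp, Prod.fst_add, Prod.snd_add, Prod.fst_sub, Prod.snd_sub,
      Prod.smul_fst, Prod.smul_snd, smul_eq_mul]
    ring
  -- norm bounds
  have hT1n : ‖T1‖ ≤ 2 / m * M := by
    calc ‖T1‖ ≤ ∑ j ∈ Finset.range (k + 1),
        ‖(Real.sqrt (x ^ 2 + (u - y j) ^ 2))⁻¹ • w j‖ := norm_sum_le _ _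
      _ ≤ ∑ j ∈ Finset.range (k + 1), 2 / m * ‖w j‖ := by
          refine Finset.sum_le_sum fun j hj => ?_
          rw [norm_smul, Real.norm_eq_abs,
            abs_of_nonneg (by positivity : (0:ℝ) ≤ (Real.sqrt (x ^ 2 + (u - y j) ^ 2))⁻¹)]
          exact mul_le_mul_of_nonneg_right (hinv j hj) (norm_nonneg _)
      _ = 2 / m * M := by rw [hM_def, Finset.mul_sum]
  have hT2n : ‖T2‖ ≤ 2 / m * (1 / R ^ 2) * M := by
    calc ‖T2‖ ≤ ∑ j ∈ Finset.range (k + 1),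
        ‖((u - y j) / Real.sqrt (x ^ 2 + (u - y j) ^ 2) + 1) • w j‖ := norm_sum_le _ _
      _ ≤ ∑ j ∈ Finset.range (k + 1), 2 / m * (1 / R ^ 2) * ‖w j‖ := by
          refine Finset.sum_le_sum fun j hj => ?_
          rw [norm_smul, Real.norm_eq_abs]
          exact mul_le_mul_of_nonneg_right (hgj j hj) (norm_nonneg _)
      _ = 2 / m * (1 / R ^ 2) * M := by rw [hM_def, Finset.mul_sum]
  have hE1 : ‖(x / 2) • T1‖ ≤ M / m * (1 / R ^ 2) := by
    rw [norm_smul, Real.norm_eq_abs, abs_div, abs_two]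
    calc |x| / 2 * ‖T1‖ ≤ (1 / R ^ 2) / 2 * (2 / m * M) := by gcongr
      _ = M / m * (1 / R ^ 2) := by field_simp; try ring
  have hE2 : ‖(1 / 2 : ℝ) • T2‖ ≤ M / m * (1 / R ^ 2) := by
    rw [norm_smul, Real.norm_eq_abs, abs_of_pos (by norm_num : (0:ℝ) < 1/2)]
    calc (1:ℝ)/2 * ‖T2‖ ≤ 1/2 * (2 / m * (1 / R ^ 2) * M) := by gcongr
      _ = M / m * (1 / R ^ 2) := by field_simp; try ring
  have hA : ‖(s / 2) • w (k + 1)‖ ≤ W / 2 := by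
    rw [norm_smul, Real.norm_eq_abs, abs_div, abs_two]
    calc |s| / 2 * ‖w (k+1)‖ ≤ 1 / 2 * W := by gcongr
      _ = W / 2 := by ring
  have hB : ‖(c / 2) • w (k + 1) - (1 / 2 : ℝ) • S‖ ≤ (W + M) / 2 := by
    calc ‖(c / 2) • w (k + 1) - (1 / 2 : ℝ) • S‖
        ≤ ‖(c / 2) • w (k + 1)‖ + ‖(1 / 2 : ℝ) • S‖ := norm_sub_le _ _
      _ ≤ W / 2 + M / 2 := by
          refine add_le_add ?_ ?_
          · rw [norm_smul, Real.norm_eq_abs, abs_div, abs_two]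
            calc |c| / 2 * ‖w (k+1)‖ ≤ 1 / 2 * W := by gcongr
              _ = W / 2 := by ring
          · rw [norm_smul, Real.norm_eq_abs, abs_of_pos (by norm_num : (0:ℝ) < 1/2)]
            calc (1:ℝ)/2 * ‖S‖ ≤ 1/2 * M := by gcongr
              _ = M / 2 := by ring
      _ = (W + M) / 2 := by ring
  -- conclude
  rw [key]
  have b1 : |symp ((s / 2) • w (k + 1)) ((1 / 2 : ℝ) • T2)| ≤
      2 * (W / 2) * (M / m * (1 / R ^ 2)) := by
    calc |symp ((s / 2) • w (k + 1)) ((1 / 2 : ℝ) • T2)|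
        ≤ 2 * ‖(s / 2) • w (k + 1)‖ * ‖(1 / 2 : ℝ) • T2‖ := symp_bound _ _
      _ ≤ 2 * (W / 2) * (M / m * (1 / R ^ 2)) := by gcongr
  have b2 : |symp ((x / 2) • T1) ((c / 2) • w (k + 1) - (1 / 2 : ℝ) • S)| ≤
      2 * (M / m * (1 / R ^ 2)) * ((W + M) / 2) := by
    calc |symp ((x / 2) • T1) ((c / 2) • w (k + 1) - (1 / 2 : ℝ) • S)|
        ≤ 2 * ‖(x / 2) • T1‖ * ‖(c / 2) • w (k + 1) - (1 / 2 : ℝ) • S‖ := symp_bound _ _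
      _ ≤ 2 * (M / m * (1 / R ^ 2)) * ((W + M) / 2) := by gcongr
  have b3 : |symp ((x / 2) • T1) ((1 / 2 : ℝ) • T2)| ≤
      2 * (M / m * (1 / R ^ 2)) * (M / m * (1 / R ^ 2)) := by
    calc |symp ((x / 2) • T1) ((1 / 2 : ℝ) • T2)|
        ≤ 2 * ‖(x / 2) • T1‖ * ‖(1 / 2 : ℝ) • T2‖ := symp_bound _ _
      _ ≤ 2 * (M / m * (1 / R ^ 2)) * (M / m * (1 / R ^ 2)) := by gcongr
  have habs := abs_add_three
    (symp ((s / 2) • w (k + 1)) ((1 / 2 : ℝ) • T2))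
    (symp ((x / 2) • T1) ((c / 2) • w (k + 1) - (1 / 2 : ℝ) • S))
    (symp ((x / 2) • T1) ((1 / 2 : ℝ) • T2))
  have hP : (0:ℝ) ≤ M / m := by positivity
  have ht : (0:ℝ) < 1 / R ^ 2 := by positivity
  have ht1 : 1 / R ^ 2 ≤ 1 := by rw [div_le_one hR2]; exact hR21
  have hCdiv : (W * (M / m) + (M / m) * (W + M) + 2 * (M / m) ^ 2 + 1) / R ^ 2 =
      (W * (M / m) + (M / m) * (W + M) + 2 * (M / m) ^ 2 + 1) * (1 / R ^ 2) := by
    ring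
  rw [hCdiv]
  nlinarith [mul_nonneg (mul_nonneg (mul_nonneg hP hP) ht.le)
      (by linarith : (0:ℝ) ≤ 1 - 1 / R ^ 2)]
end
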